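/- arXiv:1106.3063 — 3 statements merged into one kernel-verified Lean document; each statement's English description precedes it below -/
import Mathlib

section
/- For every even integer j ≥ 0 and all integers a, b with 1 ≤ a ≤ b such that a and b have the same parity, the rooted tree RT(0^j, a, b) is super edge-graceful. -/
/-- Edge type of the rooted tree `RT(a₀, …, a_{n-1})`: one edge from the root to each
child `i` (`Sum.inl i`), and one edge from child `i` to each of its `a i` leaf children
(`Sum.inr ⟨i, m⟩`).  The number of edges is `q = n + ∑ i, a i`. -/
abbrev RTEdge (n : ℕ) (a : Fin n → ℕ) := (Fin n) ⊕ (Σ i : Fin n, Fin (a i))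

/-- Vertex type of the rooted tree `RT(a₀, …, a_{n-1})`: the root (`none`), the children
`some (.inl i)` of the root, and the leaves `some (.inr ⟨i, m⟩)` attached to child `i`.
The number of vertices is `p = q + 1`. -/
abbrev RTVertex (n : ℕ) (a : Fin n → ℕ) := Option (RTEdge n a)

/-- The vertex labeling induced by an edge labeling `f`: each vertex gets the sum of the
labels of the edges incident with it. -/
def vertexSum {n : ℕ} (a : Fin n → ℕ) (f : RTEdge n a → ℤ) : RTVertex n a → ℤ
  | none => ∑ i : Fin n, f (Sum.inl i)
  | some (Sum.inl i) => f (Sum.inl i) + ∑ m : Fin (a i), f (Sum.inr ⟨i, m⟩)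
  | some (Sum.inr ⟨i, m⟩) => f (Sum.inr ⟨i, m⟩)

/-- The target label set for `q` objects: `{0, ±1, …, ±(q-1)/2}` if `q` is odd, and
`{±1, …, ±(q/2)}` if `q` is even. -/
noncomputable def segSet (q : ℕ) : Finset ℤ :=
  if q % 2 = 0 then (Finset.Icc (-((q / 2 : ℕ) : ℤ)) ((q / 2 : ℕ) : ℤ)).erase 0
  else Finset.Icc (-((q / 2 : ℕ) : ℤ)) ((q / 2 : ℕ) : ℤ)

/-- The rooted tree `RT(a₀, …, a_{n-1})` is super edge-graceful: there is an edge
labeling which is a bijection onto `{0, ±1, …, ±(q-1)/2}` (`q` odd) resp.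
`{±1, …, ±(q/2)}` (`q` even) whose induced vertex labeling is a bijection onto
`{0, ±1, …, ±(p-1)/2}` (`p` odd) resp. `{±1, …, ±(p/2)}` (`p` even), where
`q = n + ∑ i, a i` and `p = q + 1`. -/
def IsSEG {n : ℕ} (a : Fin n → ℕ) : Prop :=
  ∃ f : RTEdge n a → ℤ,
    Set.BijOn f Set.univ ↑(segSet (n + ∑ i, a i)) ∧
    Set.BijOn (vertexSum a f) Set.univ ↑(segSet (n + ∑ i, a i + 1))

/-- The sequence `(0^j, a, b)` of length `j + 2`. -/
def seq2 (j a b : ℕ) : Fin (j + 2) → ℕ :=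
  fun i => if (i : ℕ) < j then 0 else if (i : ℕ) = j then a else b

def sfun (m : ℕ) : ℤ :=
  if m % 2 = 0 then ((m / 2 + 1 : ℕ) : ℤ) else -((m / 2 + 1 : ℕ) : ℤ)

def sfun' (m : ℕ) : ℤ := if m = 0 then 0 else sfun (m - 1)

lemma sfun'_succ (k : ℕ) : sfun' (k + 1) = sfun k := by simp [sfun']

lemma sfun_inj : Function.Injective sfun := by
  intro m n h; unfold sfun at h; split_ifs at h <;> omega

lemma sfun'_inj : Function.Injective sfun' := by
  intro m n h; unfold sfun' sfun at h; split_ifs at h <;> omega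

lemma sumS (n : ℕ) :
    ∑ k ∈ Finset.range n, sfun k = if n % 2 = 0 then 0 else ((n / 2 + 1 : ℕ) : ℤ) := by
  induction n with
  | zero => simp
  | succ n ih =>
    rw [Finset.sum_range_succ, ih]
    unfold sfun; split_ifs <;> omega

lemma sum_shift (d c : ℕ) :
    ∑ k ∈ Finset.range c, sfun (d + k) =
      (∑ k ∈ Finset.range (d + c), sfun k) - ∑ k ∈ Finset.range d, sfun k := by
  induction c with
  | zero => simp
  | succ c ih =>
    rw [Finset.sum_range_succ, ih, show d + (c + 1) = (d + c) + 1 from rfl,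
      Finset.sum_range_succ]
    ring

lemma card_segSet (q : ℕ) : (segSet q).card = q := by
  unfold segSet
  split_ifs with h
  · rw [Finset.card_erase_of_mem (by simp only [Finset.mem_Icc]; omega), Int.card_Icc]
    omega
  · rw [Int.card_Icc]; omega

lemma mem_segSet_even {q m : ℕ} (hq : q % 2 = 0) (hm : m < q) : sfun m ∈ segSet q := by
  unfold segSet sfun
  rw [if_pos hq]
  simp only [Finset.mem_erase, Finset.mem_Icc]
  split_ifs <;> omega

lemma mem_segSet_odd {q m : ℕ} (hq : q % 2 = 0) (hm : m < q + 1) :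
    sfun' m ∈ segSet (q + 1) := by
  unfold segSet sfun' sfun
  rw [if_neg (by omega)]
  simp only [Finset.mem_Icc]
  split_ifs <;> omega

lemma bijOn_of_image {α : Type*} [Fintype α] (f : α → ℤ) (S : Finset ℤ)
    (hinj : Function.Injective f) (hsub : ∀ x, f x ∈ S)
    (hcard : S.card = Fintype.card α) :
    Set.BijOn f Set.univ ↑S := by
  have himg : Finset.image f Finset.univ = S := by
    apply Finset.eq_of_subset_of_card_le
    · intro y hy
      obtain ⟨x, -, rfl⟩ := Finset.mem_image.mp hy
      exact hsub x
    · rw [Finset.card_image_of_injective _ hinj, Finset.card_univ, hcard]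
  refine ⟨fun x _ => hsub x, hinj.injOn, ?_⟩
  intro y hy
  rw [← himg] at hy
  obtain ⟨x, -, rfl⟩ := Finset.mem_image.mp (Finset.mem_coe.mp hy)
  exact ⟨x, trivial, rfl⟩

lemma key {n : ℕ} (A : Fin n → ℕ) (g : RTEdge n A → ℕ) (g' : RTVertex n A → ℕ)
    (hq : (n + ∑ i, A i) % 2 = 0)
    (hginj : Function.Injective g) (hglt : ∀ e, g e < n + ∑ i, A i)
    (hg'inj : Function.Injective g') (hg'lt : ∀ v, g' v < n + ∑ i, A i + 1)
    (hvs : ∀ v, vertexSum A (fun e => sfun (g e)) v = sfun' (g' v)) :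
    IsSEG A := by
  have hcardE : Fintype.card (RTEdge n A) = n + ∑ i, A i := by
    simp [RTEdge]
  have hcardV : Fintype.card (RTVertex n A) = n + ∑ i, A i + 1 := by
    simp [RTVertex, RTEdge]
  refine ⟨fun e => sfun (g e), ?_, ?_⟩
  · exact bijOn_of_image _ _ (sfun_inj.comp hginj)
      (fun e => mem_segSet_even hq (hglt e)) (by rw [card_segSet, hcardE])
  · rw [funext hvs]
    exact bijOn_of_image _ _ (sfun'_inj.comp hg'inj)
      (fun v => mem_segSet_odd hq (hg'lt v)) (by rw [card_segSet, hcardV])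

def rootIdx (j a b k : ℕ) : ℕ :=
  if k < j then a + b + 2 + k
  else if k = j then (if a % 2 = 0 then a + b else 0)
  else (if a % 2 = 0 then a + b + 1 else 1)

def leafIdx (j a k m : ℕ) : ℕ :=
  if a % 2 = 0 then (if k = j then m else a + m)
  else (if k = j then 3 + m else if m = 0 then 2 else a + 2 + m)

def gE (j a b : ℕ) : RTEdge (j + 2) (seq2 j a b) → ℕ
  | .inl i => rootIdx j a b i
  | .inr ⟨i, m⟩ => leafIdx j a i m

def vRootIdx (j a b k : ℕ) : ℕ :=
  if k < j then a + b + 3 + k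
  else if a % 2 = 0 then rootIdx j a b k + 1
  else if k = j then 2 else 1

def gV (j a b : ℕ) : RTVertex (j + 2) (seq2 j a b) → ℕ
  | none => 0
  | some (.inl i) => vRootIdx j a b i
  | some (.inr ⟨i, m⟩) => leafIdx j a i m + 1

lemma inr_cases {j a b : ℕ} (i : Fin (j + 2)) (m : Fin (seq2 j a b i)) :
    ((i : ℕ) = j ∧ (m : ℕ) < a) ∨ ((i : ℕ) = j + 1 ∧ (m : ℕ) < b) := by
  have hm := m.isLt
  have hi := i.isLt
  by_cases h1 : (i : ℕ) < j
  · exfalso; simp only [seq2, if_pos h1] at hm; omega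
  · by_cases h2 : (i : ℕ) = j
    · exact Or.inl ⟨h2, by simpa only [seq2, if_neg h1, if_pos h2] using hm⟩
    · exact Or.inr ⟨by omega, by simpa only [seq2, if_neg h1, if_neg h2] using hm⟩

lemma gE_inj (j a b : ℕ) (ha : 1 ≤ a) (hpar : a % 2 = b % 2) :
    Function.Injective (gE j a b) := by
  intro x y h
  rcases x with i1 | ⟨i1, m1⟩ <;> rcases y with i2 | ⟨i2, m2⟩
  · have h1 := i1.isLt; have h2 := i2.isLt
    simp only [gE, rootIdx] at h
    refine congrArg Sum.inl (Fin.ext ?_)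
    split_ifs at h <;> omega
  · exfalso
    rcases inr_cases i2 m2 with ⟨e2, l2⟩ | ⟨e2, l2⟩ <;>
      (simp only [gE, rootIdx, leafIdx] at h; have h1 := i1.isLt;
       split_ifs at h <;> omega)
  · exfalso
    rcases inr_cases i1 m1 with ⟨e1, l1⟩ | ⟨e1, l1⟩ <;>
      (simp only [gE, rootIdx, leafIdx] at h; have h2 := i2.isLt;
       split_ifs at h <;> omega)
  · have hvals : (i1 : ℕ) = (i2 : ℕ) ∧ (m1 : ℕ) = (m2 : ℕ) := by
      simp only [gE, leafIdx] at h
      rcases inr_cases i1 m1 with ⟨e1, l1⟩ | ⟨e1, l1⟩ <;>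
        rcases inr_cases i2 m2 with ⟨e2, l2⟩ | ⟨e2, l2⟩ <;>
          (split_ifs at h <;> omega)
    obtain ⟨hi, hm⟩ := hvals
    have : i1 = i2 := Fin.ext hi
    subst this
    exact congrArg Sum.inr (congrArg _ (Fin.ext hm))

lemma gV_inj (j a b : ℕ) (ha : 1 ≤ a) (hpar : a % 2 = b % 2) :
    Function.Injective (gV j a b) := by
  intro x y h
  rcases x with _ | (i1 | ⟨i1, m1⟩) <;> rcases y with _ | (i2 | ⟨i2, m2⟩)
  · rfl
  · exfalso; simp only [gV, vRootIdx, rootIdx] at h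
    have h2 := i2.isLt; split_ifs at h <;> omega
  · exfalso; simp only [gV] at h; omega
  · exfalso; simp only [gV, vRootIdx, rootIdx] at h
    have h1 := i1.isLt; split_ifs at h <;> omega
  · simp only [gV, vRootIdx, rootIdx] at h
    have h1 := i1.isLt; have h2 := i2.isLt
    have : i1 = i2 := Fin.ext (by split_ifs at h <;> omega)
    rw [this]
  · exfalso; simp only [gV, vRootIdx, rootIdx, leafIdx] at h
    have h1 := i1.isLt
    rcases inr_cases i2 m2 with ⟨e2, l2⟩ | ⟨e2, l2⟩ <;> (split_ifs at h <;> omega)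
  · exfalso; simp only [gV] at h; omega
  · exfalso; simp only [gV, vRootIdx, rootIdx, leafIdx] at h
    have h2 := i2.isLt
    rcases inr_cases i1 m1 with ⟨e1, l1⟩ | ⟨e1, l1⟩ <;> (split_ifs at h <;> omega)
  · simp only [gV, leafIdx] at h
    have hvals : (i1 : ℕ) = (i2 : ℕ) ∧ (m1 : ℕ) = (m2 : ℕ) := by
      rcases inr_cases i1 m1 with ⟨e1, l1⟩ | ⟨e1, l1⟩ <;>
        rcases inr_cases i2 m2 with ⟨e2, l2⟩ | ⟨e2, l2⟩ <;>
          (split_ifs at h <;> omega)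
    obtain ⟨hi, hm⟩ := hvals
    have : i1 = i2 := Fin.ext hi
    subst this
    exact congrArg some (congrArg Sum.inr (congrArg _ (Fin.ext hm)))

lemma gE_lt (j a b : ℕ) (ha : 1 ≤ a) (hpar : a % 2 = b % 2) (e : RTEdge (j+2) (seq2 j a b)) :
    gE j a b e < j + 2 + (a + b) := by
  rcases e with i | ⟨i, m⟩
  · have h1 := i.isLt; simp only [gE, rootIdx]; split_ifs <;> omega
  · rcases inr_cases i m with ⟨e1, l1⟩ | ⟨e1, l1⟩ <;>
      (simp only [gE, leafIdx]; split_ifs <;> omega)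

lemma gV_lt (j a b : ℕ) (ha : 1 ≤ a) (hpar : a % 2 = b % 2) (v : RTVertex (j+2) (seq2 j a b)) :
    gV j a b v < j + 2 + (a + b) + 1 := by
  rcases v with _ | (i | ⟨i, m⟩)
  · simp only [gV]; omega
  · have h1 := i.isLt; simp only [gV, vRootIdx, rootIdx]; split_ifs <;> omega
  · rcases inr_cases i m with ⟨e1, l1⟩ | ⟨e1, l1⟩ <;>
      (simp only [gV, leafIdx]; split_ifs <;> omega)

lemma sum_seq2 (j a b : ℕ) : ∑ i, seq2 j a b i = a + b := by
  have h1 : ∑ i, seq2 j a b i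
      = ∑ k ∈ Finset.range (j + 2), (if k < j then 0 else if k = j then a else b) :=
    Fin.sum_univ_eq_sum_range (fun k => if k < j then 0 else if k = j then a else b) (j + 2)
  rw [h1, Finset.sum_range_succ, Finset.sum_range_succ,
    Finset.sum_congr rfl (fun k hk => if_pos (Finset.mem_range.mp hk))]
  simp only [Finset.sum_const_zero]
  split_ifs <;> omega

set_option maxHeartbeats 2000000 in
lemma vs (j a b : ℕ) (hj : j % 2 = 0) (ha : 1 ≤ a) (hpar : a % 2 = b % 2)
    (v : RTVertex (j+2) (seq2 j a b)) :
    vertexSum (seq2 j a b) (fun e => sfun (gE j a b e)) v = sfun' (gV j a b v) := by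
  rcases v with _ | (i | ⟨i, m⟩)
  · simp only [vertexSum]
    have h1 : ∑ i : Fin (j+2), sfun (gE j a b (Sum.inl i))
        = ∑ k ∈ Finset.range (j+2), sfun (rootIdx j a b k) :=
      Fin.sum_univ_eq_sum_range (fun k => sfun (rootIdx j a b k)) (j+2)
    rw [h1, Finset.sum_range_succ, Finset.sum_range_succ]
    have h2 : ∑ k ∈ Finset.range j, sfun (rootIdx j a b k)
        = ∑ k ∈ Finset.range j, sfun (a+b+2+k) :=
      Finset.sum_congr rfl (fun k hk => by rw [rootIdx, if_pos (Finset.mem_range.mp hk)])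
    rw [h2, sum_shift, sumS, sumS]
    have hr1 : rootIdx j a b j = if a % 2 = 0 then a + b else 0 := by
      unfold rootIdx; split_ifs <;> omega
    have hr2 : rootIdx j a b (j+1) = if a % 2 = 0 then a + b + 1 else 1 := by
      unfold rootIdx; split_ifs <;> omega
    rw [hr1, hr2]
    simp only [gV]
    by_cases hae : a % 2 = 0
    · rw [if_pos hae, if_pos hae]
      unfold sfun' sfun; split_ifs <;> first | contradiction | omega
    · rw [if_neg hae, if_neg hae]
      unfold sfun' sfun; split_ifs <;> first | contradiction | omega
  · by_cases hlt : (i : ℕ) < j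
    · have h0 : seq2 j a b i = 0 := by simp only [seq2, if_pos hlt]
      haveI : IsEmpty (Fin (seq2 j a b i)) := by rw [h0]; infer_instance
      simp only [vertexSum]
      rw [Finset.univ_eq_empty, Finset.sum_empty, add_zero]
      simp only [gE, gV, rootIdx, vRootIdx, if_pos hlt]
      rw [show a+b+3+(i:ℕ) = (a+b+2+(i:ℕ))+1 from by omega, sfun'_succ]
    · simp only [vertexSum, gE]
      have h1 : ∑ m : Fin (seq2 j a b i), sfun (leafIdx j a (i:ℕ) (m:ℕ))
          = ∑ k ∈ Finset.range (seq2 j a b i), sfun (leafIdx j a (i:ℕ) k) :=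
        Fin.sum_univ_eq_sum_range (fun k => sfun (leafIdx j a (i:ℕ) k)) _
      rw [h1]
      by_cases hij : (i : ℕ) = j
      · have h0 : seq2 j a b i = a := by simp only [seq2, if_neg hlt, if_pos hij]
        rw [h0]
        by_cases hae : a % 2 = 0
        · have h2 : ∑ k ∈ Finset.range a, sfun (leafIdx j a (i:ℕ) k)
              = ∑ k ∈ Finset.range a, sfun k :=
            Finset.sum_congr rfl (fun k hk => by rw [leafIdx, if_pos hae, if_pos hij])
          rw [h2, sumS]
          simp only [gV]
          unfold vRootIdx rootIdx sfun' sfun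
          split_ifs <;> first | contradiction | omega
        · have h2 : ∑ k ∈ Finset.range a, sfun (leafIdx j a (i:ℕ) k)
              = ∑ k ∈ Finset.range a, sfun (3+k) :=
            Finset.sum_congr rfl (fun k hk => by rw [leafIdx, if_neg hae, if_pos hij])
          rw [h2, sum_shift, sumS, sumS]
          simp only [gV]
          unfold vRootIdx rootIdx sfun' sfun
          split_ifs <;> first | contradiction | omega
      · have hij1 : (i : ℕ) = j + 1 := by have := i.isLt; omega
        have h0 : seq2 j a b i = b := by simp only [seq2, if_neg hlt, if_neg hij]
        rw [h0]
        by_cases hae : a % 2 = 0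
        · have h2 : ∑ k ∈ Finset.range b, sfun (leafIdx j a (i:ℕ) k)
              = ∑ k ∈ Finset.range b, sfun (a+k) :=
            Finset.sum_congr rfl (fun k hk => by rw [leafIdx, if_pos hae, if_neg hij])
          rw [h2, sum_shift, sumS, sumS]
          simp only [gV]
          unfold vRootIdx rootIdx sfun' sfun
          split_ifs <;> first | contradiction | omega
        · obtain ⟨c, rfl⟩ : ∃ c, b = c + 1 := ⟨b - 1, by omega⟩
          rw [Finset.sum_range_succ']
          have h2 : ∑ k ∈ Finset.range c, sfun (leafIdx j a (i:ℕ) (k+1))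
              = ∑ k ∈ Finset.range c, sfun (a+3+k) :=
            Finset.sum_congr rfl (fun k hk => by
              rw [leafIdx, if_neg hae, if_neg hij, if_neg (Nat.succ_ne_zero k)]
              exact congrArg sfun (by omega))
          rw [h2, sum_shift, sumS, sumS]
          have hr : rootIdx j a (c+1) (i:ℕ) = 1 := by
            unfold rootIdx; split_ifs <;> omega
          have hv : vRootIdx j a (c+1) (i:ℕ) = 1 := by
            unfold vRootIdx rootIdx; split_ifs <;> omega
          have hl : leafIdx j a (i:ℕ) 0 = 2 := by
            unfold leafIdx; split_ifs <;> omega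
          simp only [gV]
          rw [hr, hv, hl]
          clear h0 h1 h2
          unfold sfun' sfun; split_ifs <;> first | contradiction | omega
  · simp only [vertexSum, gE, gV, sfun'_succ]

/-- For every even integer `j ≥ 0` and all integers `a, b` with `1 ≤ a ≤ b` of the same
parity, the rooted tree `RT(0^j, a, b)` is super edge-graceful. -/
theorem stmt0 (j a b : ℕ) (hj : Even j) (ha : 1 ≤ a) (hab : a ≤ b)
    (hpar : a % 2 = b % 2) : IsSEG (seq2 j a b) := by
  have hj' : j % 2 = 0 := Nat.even_iff.mp hj
  have hs := sum_seq2 j a b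
  refine key (seq2 j a b) (gE j a b) (gV j a b) ?_ (gE_inj j a b ha hpar)
    (fun e => ?_) (gV_inj j a b ha hpar) (fun v => ?_) (vs j a b hj' ha hpar)
  · rw [hs]; omega
  · rw [hs]; exact gE_lt j a b ha hpar e
  · rw [hs]; exact gV_lt j a b ha hpar v
end

section
/- For every integer j ≥ 0 and all integers a, b ≥ 1 such that j + 2 + a + b is even, the rooted tree RT(0^j, a, b) is super edge-graceful. (Equivalently: every caterpillar of diameter 4 with an even number of edges is super edge-graceful.) -/
open Finset

def zig (s k : ℕ) : ℤ := if k % 2 = 0 then ((s + k / 2 + 1 : ℕ) : ℤ) else -((s + k / 2 + 1 : ℕ) : ℤ)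

lemma zig_sum (s m : ℕ) : ∑ k ∈ range m, zig s k =
    if m % 2 = 0 then 0 else ((s + (m + 1) / 2 : ℕ) : ℤ) := by
  induction m with
  | zero => simp
  | succ m ih =>
    rw [Finset.sum_range_succ, ih, zig]
    split_ifs <;> omega

lemma bijOn_of_inj_maps {X : Type*} [Fintype X] (f : X → ℤ) (T : Finset ℤ)
    (hinj : Function.Injective f) (hmaps : ∀ x, f x ∈ T)
    (hcard : Fintype.card X = T.card) :
    Set.BijOn f Set.univ ↑T := by
  refine ⟨fun x _ => hmaps x, fun x _ y _ h => hinj h, ?_⟩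
  have himg : Finset.image f Finset.univ = T := by
    apply Finset.eq_of_subset_of_card_le
    · intro z hz
      simp only [Finset.mem_image, Finset.mem_univ, true_and] at hz
      obtain ⟨x, rfl⟩ := hz; exact hmaps x
    · rw [Finset.card_image_of_injective _ hinj, Finset.card_univ, hcard]
  intro z hz
  have : z ∈ Finset.image f Finset.univ := by rw [himg]; exact hz
  simp only [Finset.mem_image, Finset.mem_univ, true_and] at this
  obtain ⟨x, hx⟩ := this
  exact ⟨x, Set.mem_univ x, hx⟩

lemma segSet_even (N : ℕ) : segSet (2 * N) = (Finset.Icc (-(N:ℤ)) N).erase 0 := by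
  have h1 : (2 * N) % 2 = 0 := by omega
  have h2 : (2 * N) / 2 = N := by omega
  rw [segSet, if_pos h1, h2]

lemma segSet_odd (N : ℕ) : segSet (2 * N + 1) = Finset.Icc (-(N:ℤ)) N := by
  have h1 : ¬ (2 * N + 1) % 2 = 0 := by omega
  have h2 : (2 * N + 1) / 2 = N := by omega
  rw [segSet, if_neg h1, h2]

lemma card_Icc_erase (N : ℕ) : ((Finset.Icc (-(N:ℤ)) N).erase 0).card = 2 * N := by
  rw [Finset.card_erase_of_mem (by simp), Int.card_Icc]
  omega

lemma card_Icc' (N : ℕ) : (Finset.Icc (-(N:ℤ)) N).card = 2 * N + 1 := by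
  rw [Int.card_Icc]; omega

lemma seq2_lt {j a b : ℕ} (i : Fin (j+2)) (h : (i:ℕ) < j) : seq2 j a b i = 0 := by
  simp [seq2, h]

lemma seq2_eqj {j a b : ℕ} (i : Fin (j+2)) (h : (i:ℕ) = j) : seq2 j a b i = a := by
  simp [seq2, h]

lemma seq2_eqj1 {j a b : ℕ} (i : Fin (j+2)) (h : (i:ℕ) = j + 1) : seq2 j a b i = b := by
  have h1 : ¬ ((i:ℕ) < j) := by omega
  have h2 : ¬ ((i:ℕ) = j) := by omega
  simp [seq2, h1, h2]

lemma seq2_sum (j a b : ℕ) : ∑ i : Fin (j+2), seq2 j a b i = a + b := by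
  have : ∑ i : Fin (j+2), seq2 j a b i
      = ∑ k ∈ range (j+2), (fun k => if k < j then 0 else if k = j then a else b) k :=
    Fin.sum_univ_eq_sum_range (fun k => if k < j then 0 else if k = j then a else b) (j+2)
  rw [this, Finset.sum_range_succ, Finset.sum_range_succ]
  have h0 : ∑ k ∈ range j, (fun k => if k < j then 0 else if k = j then a else b) k = 0 := by
    apply Finset.sum_eq_zero
    intro k hk
    simp only [Finset.mem_range] at hk
    simp [hk]
  rw [h0]
  simp only []
  have : ¬ (j < j) := lt_irrefl j
  have h2 : ¬ (j + 1 < j) := by omega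
  have h3 : ¬ (j + 1 = j) := by omega
  simp [this, h2, h3]

lemma sigma_cases (j a b : ℕ) (e : Σ i : Fin (j+2), Fin (seq2 j a b i)) :
    ((e.1 : ℕ) = j ∧ (e.2 : ℕ) < a) ∨ ((e.1 : ℕ) = j + 1 ∧ (e.2 : ℕ) < b) := by
  have h1 : (e.1 : ℕ) < j + 2 := e.1.2
  have h2 : (e.2 : ℕ) < if (e.1:ℕ) < j then 0 else if (e.1:ℕ) = j then a else b := e.2.2
  split_ifs at h2 <;> omega

lemma sigma_ext {n : ℕ} {c : Fin n → ℕ} (e e' : Σ i : Fin n, Fin (c i))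
    (h1 : (e.1 : ℕ) = (e'.1 : ℕ)) (h2 : (e.2 : ℕ) = (e'.2 : ℕ)) : e = e' := by
  obtain ⟨⟨i, hi⟩, ⟨m, hm⟩⟩ := e
  obtain ⟨⟨i', hi'⟩, ⟨m', hm'⟩⟩ := e'
  simp only at h1 h2
  subst h1; subst h2; rfl

def masterF (j a b : ℕ) (U W Rt : ℕ → ℤ) : RTEdge (j+2) (seq2 j a b) → ℤ :=
  fun e => match e with
  | Sum.inl i => Rt (i : ℕ)
  | Sum.inr e => if (e.1 : ℕ) = j then U (e.2 : ℕ) else W (e.2 : ℕ)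

lemma masterF_inl (j a b : ℕ) (U W Rt : ℕ → ℤ) (i : Fin (j+2)) :
    masterF j a b U W Rt (Sum.inl i) = Rt (i : ℕ) := rfl

lemma masterF_inr (j a b : ℕ) (U W Rt : ℕ → ℤ) (e : Σ i : Fin (j+2), Fin (seq2 j a b i)) :
    masterF j a b U W Rt (Sum.inr e) = if (e.1 : ℕ) = j then U (e.2 : ℕ) else W (e.2 : ℕ) := rfl

lemma tri_fin (j : ℕ) (x : Fin (j+2)) : (x:ℕ) < j ∨ (x:ℕ) = j ∨ (x:ℕ) = j+1 := by
  have := x.2; omega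

lemma master (j a b N : ℕ)
    (hq : j + 2 + a + b = 2 * N)
    (U W Rt : ℕ → ℤ)
    (hUm : ∀ k, k < a → (U k ≠ 0 ∧ -(N:ℤ) ≤ U k ∧ U k ≤ N))
    (hWm : ∀ k, k < b → (W k ≠ 0 ∧ -(N:ℤ) ≤ W k ∧ W k ≤ N))
    (hRtm : ∀ k, k < j + 2 → (Rt k ≠ 0 ∧ -(N:ℤ) ≤ Rt k ∧ Rt k ≤ N))
    (hUinj : ∀ k l, k < a → l < a → U k = U l → k = l)
    (hWinj : ∀ k l, k < b → l < b → W k = W l → k = l)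
    (hRtinj : ∀ k l, k < j+2 → l < j+2 → Rt k = Rt l → k = l)
    (hUW : ∀ k l, k < a → l < b → U k ≠ W l)
    (hURt : ∀ k l, k < a → l < j+2 → U k ≠ Rt l)
    (hWRt : ∀ k l, k < b → l < j+2 → W k ≠ Rt l)
    (R uL wL : ℤ)
    (hR : ∑ k ∈ Finset.range (j+2), Rt k = R)
    (hu : Rt j + ∑ k ∈ Finset.range a, U k = uL)
    (hw : Rt (j+1) + ∑ k ∈ Finset.range b, W k = wL)
    (hRm : -(N:ℤ) ≤ R ∧ R ≤ N) (hum : -(N:ℤ) ≤ uL ∧ uL ≤ N) (hwm : -(N:ℤ) ≤ wL ∧ wL ≤ N)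
    (hRu : R ≠ uL) (hRw : R ≠ wL) (huw : uL ≠ wL)
    (hUs : ∀ k, k < a → (U k ≠ R ∧ U k ≠ uL ∧ U k ≠ wL))
    (hWs : ∀ k, k < b → (W k ≠ R ∧ W k ≠ uL ∧ W k ≠ wL))
    (hRts : ∀ k, k < j → (Rt k ≠ R ∧ Rt k ≠ uL ∧ Rt k ≠ wL)) :
    IsSEG (seq2 j a b) := by
  classical
  set f := masterF j a b U W Rt with hfdef
  -- edge evaluation is definitional (masterF_inl/inr)
  -- edge injectivity
  have finj : Function.Injective f := by
    intro x y h
    rcases x with i | e <;> rcases y with i' | e'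
    · rw [hfdef, masterF_inl, masterF_inl] at h
      exact congrArg Sum.inl (Fin.ext (hRtinj _ _ i.2 i'.2 h))
    · exfalso
      rw [hfdef, masterF_inl, masterF_inr] at h
      rcases sigma_cases j a b e' with ⟨he, hm⟩ | ⟨he, hm⟩
      · rw [if_pos he] at h; exact hURt _ _ hm i.2 h.symm
      · rw [if_neg (by omega)] at h; exact hWRt _ _ hm i.2 h.symm
    · exfalso
      rw [hfdef, masterF_inl, masterF_inr] at h
      rcases sigma_cases j a b e with ⟨he, hm⟩ | ⟨he, hm⟩
      · rw [if_pos he] at h; exact hURt _ _ hm i'.2 h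
      · rw [if_neg (by omega)] at h; exact hWRt _ _ hm i'.2 h
    · rw [hfdef, masterF_inr, masterF_inr] at h
      rcases sigma_cases j a b e with ⟨he, hm⟩ | ⟨he, hm⟩ <;>
        rcases sigma_cases j a b e' with ⟨he', hm'⟩ | ⟨he', hm'⟩
      · rw [if_pos he, if_pos he'] at h
        exact congrArg Sum.inr (sigma_ext e e' (by omega) (hUinj _ _ hm hm' h))
      · rw [if_pos he, if_neg (by omega)] at h
        exact absurd h (hUW _ _ hm hm')
      · rw [if_neg (by omega), if_pos he'] at h
        exact absurd h.symm (hUW _ _ hm' hm)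
      · rw [if_neg (by omega), if_neg (by omega)] at h
        exact congrArg Sum.inr (sigma_ext e e' (by omega) (hWinj _ _ hm hm' h))
  -- edge mapsTo
  have fmaps : ∀ x, f x ∈ (Finset.Icc (-(N:ℤ)) N).erase 0 := by
    intro x
    rw [Finset.mem_erase, Finset.mem_Icc]
    rcases x with i | e
    · rw [hfdef, masterF_inl]
      obtain ⟨h1, h2, h3⟩ := hRtm (i:ℕ) i.2
      exact ⟨h1, h2, h3⟩
    · rw [hfdef, masterF_inr]
      rcases sigma_cases j a b e with ⟨he, hm⟩ | ⟨he, hm⟩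
      · rw [if_pos he]
        obtain ⟨h1, h2, h3⟩ := hUm _ hm
        exact ⟨h1, h2, h3⟩
      · rw [if_neg (by omega)]
        obtain ⟨h1, h2, h3⟩ := hWm _ hm
        exact ⟨h1, h2, h3⟩
  -- cardinality of edge type
  have fcard : Fintype.card (RTEdge (j+2) (seq2 j a b)) = 2 * N := by
    have h1 : Fintype.card (RTEdge (j+2) (seq2 j a b))
        = (j+2) + ∑ i : Fin (j+2), seq2 j a b i := by
      simp [RTEdge, Fintype.card_sigma]
    rw [h1, seq2_sum]; omega
  -- vertexSum evaluation lemmas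
  have vnone : vertexSum (seq2 j a b) f none = R := by
    show (∑ i : Fin (j+2), f (Sum.inl i)) = R
    exact (Fin.sum_univ_eq_sum_range Rt (j+2)).trans hR
  have vinr : ∀ e, vertexSum (seq2 j a b) f (some (Sum.inr e))
      = if (e.1 : ℕ) = j then U (e.2 : ℕ) else W (e.2 : ℕ) := by
    intro e; obtain ⟨i, m⟩ := e; rfl
  have vinl : ∀ i : Fin (j+2), vertexSum (seq2 j a b) f (some (Sum.inl i))
      = if (i:ℕ) < j then Rt (i:ℕ) else if (i:ℕ) = j then uL else wL := by
    intro i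
    show Rt (i:ℕ) + (∑ m : Fin (seq2 j a b i), f (Sum.inr ⟨i, m⟩)) = _
    have hsum : (∑ m : Fin (seq2 j a b i), f (Sum.inr ⟨i, m⟩))
        = ∑ k ∈ Finset.range (seq2 j a b i), (if (i:ℕ) = j then U k else W k) :=
      Fin.sum_univ_eq_sum_range (fun k => if (i:ℕ) = j then U k else W k) _
    rw [hsum]
    rcases tri_fin j i with p | p | p
    · rw [seq2_lt i p, if_pos p]
      simp
    · rw [seq2_eqj i p, if_neg (by omega), if_pos p]
      rw [show (∑ k ∈ Finset.range a, if (i:ℕ) = j then U k else W k)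
          = ∑ k ∈ Finset.range a, U k from
        Finset.sum_congr rfl (fun k _ => by rw [if_pos p])]
      rw [p]; exact hu
    · rw [seq2_eqj1 i p, if_neg (by omega), if_neg (by omega)]
      rw [show (∑ k ∈ Finset.range b, if (i:ℕ) = j then U k else W k)
          = ∑ k ∈ Finset.range b, W k from
        Finset.sum_congr rfl (fun k _ => by rw [if_neg (by omega)])]
      rw [p]; exact hw
  -- vertex injectivity
  have vinj : Function.Injective (vertexSum (seq2 j a b) f) := by
    intro v w h
    rcases v with _ | (i | e) <;> rcases w with _ | (i' | e')
    · rfl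
    · exfalso
      rw [vnone, vinl] at h
      rcases tri_fin j i' with p | p | p
      · rw [if_pos p] at h; exact (hRts _ p).1 h.symm
      · rw [if_neg (by omega), if_pos p] at h; exact hRu h
      · rw [if_neg (by omega), if_neg (by omega)] at h; exact hRw h
    · exfalso
      rw [vnone, vinr] at h
      rcases sigma_cases j a b e' with ⟨he, hm⟩ | ⟨he, hm⟩
      · rw [if_pos he] at h; exact (hUs _ hm).1 h.symm
      · rw [if_neg (by omega)] at h; exact (hWs _ hm).1 h.symm
    · exfalso
      rw [vnone, vinl] at h
      rcases tri_fin j i with p | p | p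
      · rw [if_pos p] at h; exact (hRts _ p).1 h
      · rw [if_neg (by omega), if_pos p] at h; exact hRu h.symm
      · rw [if_neg (by omega), if_neg (by omega)] at h; exact hRw h.symm
    · rw [vinl, vinl] at h
      rcases tri_fin j i with p | p | p <;> rcases tri_fin j i' with q | q | q
      · rw [if_pos p, if_pos q] at h
        exact congrArg (fun t => some (Sum.inl t))
          (Fin.ext (hRtinj _ _ (by omega) (by omega) h))
      · rw [if_pos p, if_neg (by omega), if_pos q] at h
        exact absurd h (hRts _ p).2.1
      · rw [if_pos p, if_neg (by omega), if_neg (by omega)] at h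
        exact absurd h (hRts _ p).2.2
      · rw [if_neg (by omega), if_pos p, if_pos q] at h
        exact absurd h.symm (hRts _ q).2.1
      · rw [if_neg (by omega), if_pos p, if_neg (by omega), if_pos q] at h
        exact congrArg (fun t => some (Sum.inl t)) (Fin.ext (by omega))
      · rw [if_neg (by omega), if_pos p, if_neg (by omega), if_neg (by omega)] at h
        exact absurd h huw
      · rw [if_neg (by omega), if_neg (by omega), if_pos q] at h
        exact absurd h.symm (hRts _ q).2.2
      · rw [if_neg (by omega), if_neg (by omega), if_neg (by omega), if_pos q] at h
        exact absurd h.symm huw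
      · rw [if_neg (by omega), if_neg (by omega), if_neg (by omega), if_neg (by omega)] at h
        exact congrArg (fun t => some (Sum.inl t)) (Fin.ext (by omega))
    · exfalso
      rw [vinl, vinr] at h
      rcases tri_fin j i with p | p | p <;>
        rcases sigma_cases j a b e' with ⟨he, hm⟩ | ⟨he, hm⟩
      · rw [if_pos p, if_pos he] at h; exact hURt _ _ hm (by omega) h.symm
      · rw [if_pos p, if_neg (by omega)] at h; exact hWRt _ _ hm (by omega) h.symm
      · rw [if_neg (by omega), if_pos p, if_pos he] at h; exact (hUs _ hm).2.1 h.symm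
      · rw [if_neg (by omega), if_pos p, if_neg (by omega)] at h; exact (hWs _ hm).2.1 h.symm
      · rw [if_neg (by omega), if_neg (by omega), if_pos he] at h; exact (hUs _ hm).2.2 h.symm
      · rw [if_neg (by omega), if_neg (by omega), if_neg (by omega)] at h
        exact (hWs _ hm).2.2 h.symm
    · exfalso
      rw [vinr, vnone] at h
      rcases sigma_cases j a b e with ⟨he, hm⟩ | ⟨he, hm⟩
      · rw [if_pos he] at h; exact (hUs _ hm).1 h
      · rw [if_neg (by omega)] at h; exact (hWs _ hm).1 h
    · exfalso
      rw [vinr, vinl] at h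
      rcases tri_fin j i' with p | p | p <;>
        rcases sigma_cases j a b e with ⟨he, hm⟩ | ⟨he, hm⟩
      · rw [if_pos he, if_pos p] at h; exact hURt _ _ hm (by omega) h
      · rw [if_neg (show ¬((e.1:ℕ) = j) from by omega), if_pos p] at h
        exact hWRt _ _ hm (by omega) h
      · rw [if_pos he, if_neg (show ¬((i':ℕ) < j) from by omega),
          if_pos p] at h
        exact (hUs _ hm).2.1 h
      · rw [if_neg (show ¬((e.1:ℕ) = j) from by omega),
          if_neg (show ¬((i':ℕ) < j) from by omega), if_pos p] at h
        exact (hWs _ hm).2.1 h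
      · rw [if_pos he, if_neg (show ¬((i':ℕ) < j) from by omega),
          if_neg (show ¬((i':ℕ) = j) from by omega)] at h
        exact (hUs _ hm).2.2 h
      · rw [if_neg (show ¬((e.1:ℕ) = j) from by omega),
          if_neg (show ¬((i':ℕ) < j) from by omega),
          if_neg (show ¬((i':ℕ) = j) from by omega)] at h
        exact (hWs _ hm).2.2 h
    · rw [vinr, vinr] at h
      rcases sigma_cases j a b e with ⟨he, hm⟩ | ⟨he, hm⟩ <;>
        rcases sigma_cases j a b e' with ⟨he', hm'⟩ | ⟨he', hm'⟩
      · rw [if_pos he, if_pos he'] at h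
        exact congrArg (fun t => some (Sum.inr t))
          (sigma_ext e e' (by omega) (hUinj _ _ hm hm' h))
      · rw [if_pos he, if_neg (by omega)] at h
        exact absurd h (hUW _ _ hm hm')
      · rw [if_neg (by omega), if_pos he'] at h
        exact absurd h.symm (hUW _ _ hm' hm)
      · rw [if_neg (by omega), if_neg (by omega)] at h
        exact congrArg (fun t => some (Sum.inr t))
          (sigma_ext e e' (by omega) (hWinj _ _ hm hm' h))
  -- vertex mapsTo
  have vmaps : ∀ x, vertexSum (seq2 j a b) f x ∈ Finset.Icc (-(N:ℤ)) N := by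
    intro x
    rw [Finset.mem_Icc]
    rcases x with _ | (i | e)
    · rw [vnone]; exact hRm
    · rw [vinl]
      rcases tri_fin j i with p | p | p
      · rw [if_pos p]
        obtain ⟨_, h2, h3⟩ := hRtm (i:ℕ) (by omega)
        exact ⟨h2, h3⟩
      · rw [if_neg (by omega), if_pos p]; exact hum
      · rw [if_neg (by omega), if_neg (by omega)]; exact hwm
    · rw [vinr]
      rcases sigma_cases j a b e with ⟨he, hm⟩ | ⟨he, hm⟩
      · rw [if_pos he]
        obtain ⟨_, h2, h3⟩ := hUm _ hm
        exact ⟨h2, h3⟩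
      · rw [if_neg (by omega)]
        obtain ⟨_, h2, h3⟩ := hWm _ hm
        exact ⟨h2, h3⟩
  -- vertex cardinality
  have vcard : Fintype.card (RTVertex (j+2) (seq2 j a b)) = 2 * N + 1 := by
    rw [show Fintype.card (RTVertex (j+2) (seq2 j a b))
        = Fintype.card (RTEdge (j+2) (seq2 j a b)) + 1 from Fintype.card_option, fcard]
  -- assemble
  unfold IsSEG
  refine ⟨f, ?_, ?_⟩
  · rw [seq2_sum, show j + 2 + (a + b) = 2 * N from by omega, segSet_even]
    exact bijOn_of_inj_maps f _ finj fmaps (by rw [fcard, card_Icc_erase])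
  · rw [seq2_sum, show j + 2 + (a + b) + 1 = 2 * N + 1 from by omega, segSet_odd]
    exact bijOn_of_inj_maps _ _ vinj vmaps (by rw [vcard, card_Icc'])

set_option maxHeartbeats 1600000 in
/-- Every caterpillar of diameter `4` with an even number of edges is super
edge-graceful: for every `j ≥ 0` and all `a, b ≥ 1` such that `j + 2 + a + b` is even,
the rooted tree `RT(0^j, a, b)` is super edge-graceful. -/
theorem stmt2 (j a b : ℕ) (ha : 1 ≤ a) (hb : 1 ≤ b)
    (heven : Even (j + 2 + a + b)) : IsSEG (seq2 j a b) := by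
  obtain ⟨N, hN0⟩ := heven
  have hN : j + 2 + a + b = 2 * N := by omega
  clear hN0
  rcases Nat.mod_two_eq_zero_or_one a with ha2 | ha2 <;>
    rcases Nat.mod_two_eq_zero_or_one b with hb2 | hb2
  · -- a even, b even, j even
    have hj2 : j % 2 = 0 := by omega
    refine master j a b N hN (zig 0) (zig (a/2))
      (fun k => if k < j then zig (a/2 + b/2) k else if k = j then (N:ℤ) else -(N:ℤ))
      ?_ ?_ ?_ ?_ ?_ ?_ ?_ ?_ ?_ 0 (N:ℤ) (-(N:ℤ)) ?_ ?_ ?_ ?_ ?_ ?_ ?_ ?_ ?_ ?_ ?_ ?_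
    · intro k hk; simp only [zig]; split_ifs <;> omega
    · intro k hk; simp only [zig]; split_ifs <;> omega
    · intro k hk; simp only [zig]; split_ifs <;> omega
    · intro k l hk hl h; simp only [zig] at h; split_ifs at h <;> omega
    · intro k l hk hl h; simp only [zig] at h; split_ifs at h <;> omega
    · intro k l hk hl h; simp only [zig] at h; split_ifs at h <;> omega
    · intro k l hk hl; simp only [zig]; split_ifs <;> omega
    · intro k l hk hl; simp only [zig]; split_ifs <;> omega
    · intro k l hk hl; simp only [zig]; split_ifs <;> omega
    · -- root sum
      rw [Finset.sum_range_succ, Finset.sum_range_succ]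
      have h0 : (∑ k ∈ Finset.range j,
          (fun k => if k < j then zig (a/2 + b/2) k else if k = j then (N:ℤ) else -(N:ℤ)) k)
          = ∑ k ∈ Finset.range j, zig (a/2 + b/2) k :=
        Finset.sum_congr rfl (fun k hk => if_pos (Finset.mem_range.mp hk))
      rw [h0, zig_sum]
      simp only []
      split_ifs <;> omega
    · rw [zig_sum]
      simp only []
      split_ifs <;> omega
    · rw [zig_sum]
      split_ifs <;> omega
    · omega
    · omega
    · omega
    · omega
    · omega
    · omega
    · intro k hk; simp only [zig]; split_ifs <;> omega
    · intro k hk; simp only [zig]; split_ifs <;> omega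
    · intro k hk; simp only [zig]; split_ifs <;> omega
  · -- a even, b odd, j odd
    refine master j a b N hN (zig 0) (zig (a/2))
      (fun k => if k < j then zig (a/2 + (b+1)/2) k
        else if k = j then -(N:ℤ) else -(((a/2 + (b+1)/2 : ℕ)) : ℤ))
      ?_ ?_ ?_ ?_ ?_ ?_ ?_ ?_ ?_
      (-(((a/2 + (b+1)/2 : ℕ)) : ℤ)) (-(N:ℤ)) 0
      ?_ ?_ ?_ ?_ ?_ ?_ ?_ ?_ ?_ ?_ ?_ ?_
    · intro k hk; simp only [zig]; split_ifs <;> omega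
    · intro k hk; simp only [zig]; split_ifs <;> omega
    · intro k hk; simp only [zig]; split_ifs <;> omega
    · intro k l hk hl h; simp only [zig] at h; split_ifs at h <;> omega
    · intro k l hk hl h; simp only [zig] at h; split_ifs at h <;> omega
    · intro k l hk hl h; simp only [zig] at h; split_ifs at h <;> omega
    · intro k l hk hl; simp only [zig]; split_ifs <;> omega
    · intro k l hk hl; simp only [zig]; split_ifs <;> omega
    · intro k l hk hl; simp only [zig]; split_ifs <;> omega
    · rw [Finset.sum_range_succ, Finset.sum_range_succ]
      have h0 : (∑ k ∈ Finset.range j,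
          (fun k => if k < j then zig (a/2 + (b+1)/2) k
            else if k = j then -(N:ℤ) else -(((a/2 + (b+1)/2 : ℕ)) : ℤ)) k)
          = ∑ k ∈ Finset.range j, zig (a/2 + (b+1)/2) k :=
        Finset.sum_congr rfl (fun k hk => if_pos (Finset.mem_range.mp hk))
      rw [h0, zig_sum]
      simp only []
      split_ifs <;> omega
    · rw [zig_sum]
      simp only []
      split_ifs <;> omega
    · rw [zig_sum]
      split_ifs <;> omega
    · omega
    · omega
    · omega
    · omega
    · omega
    · omega
    · intro k hk; simp only [zig]; split_ifs <;> omega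
    · intro k hk; simp only [zig]; split_ifs <;> omega
    · intro k hk; simp only [zig]; split_ifs <;> omega
  · -- a odd, b even, j odd
    refine master j a b N hN (zig 0) (zig ((a+1)/2))
      (fun k => if k < j then zig ((a+1)/2 + b/2) k
        else if k = j then -((((a+1)/2 : ℕ)) : ℤ) else -(N:ℤ))
      ?_ ?_ ?_ ?_ ?_ ?_ ?_ ?_ ?_
      (-((((a+1)/2 : ℕ)) : ℤ)) 0 (-(N:ℤ))
      ?_ ?_ ?_ ?_ ?_ ?_ ?_ ?_ ?_ ?_ ?_ ?_
    · intro k hk; simp only [zig]; split_ifs <;> omega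
    · intro k hk; simp only [zig]; split_ifs <;> omega
    · intro k hk; simp only [zig]; split_ifs <;> omega
    · intro k l hk hl h; simp only [zig] at h; split_ifs at h <;> omega
    · intro k l hk hl h; simp only [zig] at h; split_ifs at h <;> omega
    · intro k l hk hl h; simp only [zig] at h; split_ifs at h <;> omega
    · intro k l hk hl; simp only [zig]; split_ifs <;> omega
    · intro k l hk hl; simp only [zig]; split_ifs <;> omega
    · intro k l hk hl; simp only [zig]; split_ifs <;> omega
    · rw [Finset.sum_range_succ, Finset.sum_range_succ]
      have h0 : (∑ k ∈ Finset.range j,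
          (fun k => if k < j then zig ((a+1)/2 + b/2) k
            else if k = j then -((((a+1)/2 : ℕ)) : ℤ) else -(N:ℤ)) k)
          = ∑ k ∈ Finset.range j, zig ((a+1)/2 + b/2) k :=
        Finset.sum_congr rfl (fun k hk => if_pos (Finset.mem_range.mp hk))
      rw [h0, zig_sum]
      simp only []
      split_ifs <;> omega
    · rw [zig_sum]
      simp only []
      split_ifs <;> omega
    · rw [zig_sum]
      split_ifs <;> omega
    · omega
    · omega
    · omega
    · omega
    · omega
    · omega
    · intro k hk; simp only [zig]; split_ifs <;> omega
    · intro k hk; simp only [zig]; split_ifs <;> omega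
    · intro k hk; simp only [zig]; split_ifs <;> omega
  · -- a odd, b odd, j even
    refine master j a b N hN
      (fun k => if k = 0 then (-2:ℤ) else zig 2 (k-1))
      (fun k => if k = 0 then (2:ℤ) else zig (2 + (a-1)/2) (k-1))
      (fun k => if k < j then zig (2 + (a-1)/2 + (b-1)/2) k
        else if k = j then (1:ℤ) else (-1:ℤ))
      ?_ ?_ ?_ ?_ ?_ ?_ ?_ ?_ ?_ 0 (-1) 1
      ?_ ?_ ?_ ?_ ?_ ?_ ?_ ?_ ?_ ?_ ?_ ?_
    · intro k hk; simp only [zig]; split_ifs <;> omega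
    · intro k hk; simp only [zig]; split_ifs <;> omega
    · intro k hk; simp only [zig]; split_ifs <;> omega
    · intro k l hk hl h; simp only [zig] at h; split_ifs at h <;> omega
    · intro k l hk hl h; simp only [zig] at h; split_ifs at h <;> omega
    · intro k l hk hl h; simp only [zig] at h; split_ifs at h <;> omega
    · intro k l hk hl; simp only [zig]; split_ifs <;> omega
    · intro k l hk hl; simp only [zig]; split_ifs <;> omega
    · intro k l hk hl; simp only [zig]; split_ifs <;> omega
    · rw [Finset.sum_range_succ, Finset.sum_range_succ]
      have h0 : (∑ k ∈ Finset.range j,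
          (fun k => if k < j then zig (2 + (a-1)/2 + (b-1)/2) k
            else if k = j then (1:ℤ) else (-1:ℤ)) k)
          = ∑ k ∈ Finset.range j, zig (2 + (a-1)/2 + (b-1)/2) k :=
        Finset.sum_congr rfl (fun k hk => if_pos (Finset.mem_range.mp hk))
      rw [h0, zig_sum]
      simp only []
      split_ifs <;> omega
    · obtain ⟨a', rfl⟩ : ∃ a', a = a' + 1 := ⟨a - 1, by omega⟩
      rw [Finset.sum_range_succ']
      have h1 : (∑ i ∈ Finset.range a',
          (fun k => if k = 0 then (-2:ℤ) else zig 2 (k-1)) (i+1))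
          = ∑ i ∈ Finset.range a', zig 2 i :=
        Finset.sum_congr rfl (fun i _ => by simp)
      rw [h1, zig_sum]
      simp only []
      split_ifs <;> omega
    · obtain ⟨b', rfl⟩ : ∃ b', b = b' + 1 := ⟨b - 1, by omega⟩
      rw [Finset.sum_range_succ']
      have h1 : (∑ i ∈ Finset.range b',
          (fun k => if k = 0 then (2:ℤ) else zig (2 + (a-1)/2) (k-1)) (i+1))
          = ∑ i ∈ Finset.range b', zig (2 + (a-1)/2) i :=
        Finset.sum_congr rfl (fun i _ => by simp)
      rw [h1, zig_sum]
      simp only []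
      split_ifs <;> omega
    · omega
    · omega
    · omega
    · omega
    · omega
    · omega
    · intro k hk; simp only [zig]; split_ifs <;> omega
    · intro k hk; simp only [zig]; split_ifs <;> omega
    · intro k hk; simp only [zig]; split_ifs <;> omega
end

section
/- For all odd integers j ≥ 3 and b ≥ 3, the rooted tree RT(0^j, 1, b) is super edge-graceful. -/
namespace SEG6

def gg (s T k : ℕ) : ℤ :=
  if k ≤ s then (k:ℤ) - ((s:ℤ)+T+2) else if k = s+1 then -2 else (k:ℤ) - s + T

def hh (s T m : ℕ) : ℤ :=
  if (m:ℤ) + 2 ≤ T then (m:ℤ) - ((T:ℤ)+1)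
  else if (m:ℤ) = (T:ℤ) - 1 then -1
  else if (m:ℤ) ≤ 2*(T:ℤ) - 1 then (m:ℤ) - T + 2
  else (s:ℤ) + T + 1

def ff (s T : ℕ) : RTEdge (2*s+1+2) (seq2 (2*s+1) 1 (2*T+1)) → ℤ
  | .inl i => if (i:ℕ) = 2*s+1 then (s:ℤ)+T+2 else if (i:ℕ) = 2*s+2 then 0 else gg s T i
  | .inr ⟨i, m⟩ => if (i:ℕ) = 2*s+1 then 1 else hh s T m

def vv (s T : ℕ) : RTVertex (2*s+1+2) (seq2 (2*s+1) 1 (2*T+1)) → ℤ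
  | none => -((s:ℤ)+T+3)
  | some (.inl i) =>
      if (i:ℕ) = 2*s+1 then (s:ℤ)+T+3 else if (i:ℕ) = 2*s+2 then (s:ℤ)+T+2 else gg s T i
  | some (.inr ⟨i, m⟩) => if (i:ℕ) = 2*s+1 then 1 else hh s T m

lemma gg_cases (s T : ℕ) (hs : 1 ≤ s) (hT : 1 ≤ T) (k : ℕ) (hk : k ≤ 2*s) :
    gg s T k = -2 ∨ (-((s:ℤ)+T+2) ≤ gg s T k ∧ gg s T k ≤ -((T:ℤ)+2)) ∨
      ((T:ℤ)+2 ≤ gg s T k ∧ gg s T k ≤ (s:ℤ)+T) := by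
  unfold gg; split_ifs <;> omega

lemma hh_cases (s T : ℕ) (hT : 1 ≤ T) (m : ℕ) (hm : m ≤ 2*T) :
    hh s T m = -1 ∨ (-((T:ℤ)+1) ≤ hh s T m ∧ hh s T m ≤ -3) ∨
      (2 ≤ hh s T m ∧ hh s T m ≤ (T:ℤ)+1) ∨ hh s T m = (s:ℤ)+T+1 := by
  unfold hh; split_ifs <;> omega

lemma gg_inj (s T : ℕ) (hs : 1 ≤ s) (hT : 1 ≤ T) (k k' : ℕ) (hk : k ≤ 2*s) (hk' : k' ≤ 2*s)
    (h : gg s T k = gg s T k') : k = k' := by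
  unfold gg at h; split_ifs at h <;> omega

lemma hh_inj (s T : ℕ) (hs : 1 ≤ s) (hT : 1 ≤ T) (m m' : ℕ) (hm : m ≤ 2*T) (hm' : m' ≤ 2*T)
    (h : hh s T m = hh s T m') : m = m' := by
  unfold hh at h; split_ifs at h <;> omega

lemma seqv (s T : ℕ) (i : Fin (2*s+1+2)) :
    seq2 (2*s+1) 1 (2*T+1) i =
      if (i:ℕ) < 2*s+1 then 0 else if (i:ℕ) = 2*s+1 then 1 else 2*T+1 := rfl

lemma idx2 (s T : ℕ) (i : Fin (2*s+1+2)) (m : Fin (seq2 (2*s+1) 1 (2*T+1) i)) :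
    ((i:ℕ) = 2*s+1 ∧ (m:ℕ) = 0) ∨ ((i:ℕ) = 2*s+2 ∧ (m:ℕ) ≤ 2*T) := by
  have h2 := i.isLt
  have h1 : (m:ℕ) < (if (i:ℕ) < 2*s+1 then 0 else if (i:ℕ) = 2*s+1 then 1 else 2*T+1) := m.isLt
  split_ifs at h1 <;> omega

lemma sum_shift (n : ℕ) (c : ℤ) :
    2 * ∑ k ∈ Finset.range n, ((k:ℤ) + c) = (n:ℤ)*((n:ℤ)-1) + 2*(n:ℤ)*c := by
  induction n with
  | zero => simp
  | succ n ih =>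
    rw [Finset.sum_range_succ, mul_add, ih]
    push_cast; ring

lemma SG (s T : ℕ) (hs : 1 ≤ s) :
    ∑ k ∈ Finset.range (2*s+1), gg s T k = -(2*(s:ℤ)+2*T+5) := by
  rw [Finset.range_eq_Ico,
      ← Finset.sum_Ico_consecutive _ (by omega : 0 ≤ s+2) (by omega : s+2 ≤ 2*s+1),
      ← Finset.sum_Ico_consecutive _ (by omega : 0 ≤ s+1) (by omega : s+1 ≤ s+2)]
  rw [Finset.sum_Ico_eq_sum_range, Finset.sum_Ico_eq_sum_range, Finset.sum_Ico_eq_sum_range]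
  have e1 : s+1-0 = s+1 := by omega
  have e2 : s+2-(s+1) = 1 := by omega
  have e3 : 2*s+1-(s+2) = s-1 := by omega
  rw [e1, e2, e3]
  have p1 : ∑ k ∈ Finset.range (s+1), gg s T (0+k)
      = ∑ k ∈ Finset.range (s+1), ((k:ℤ) + (-((s:ℤ)+T+2))) := by
    refine Finset.sum_congr rfl fun k hk => ?_
    have hk' := Finset.mem_range.mp hk
    unfold gg
    rw [if_pos (by omega)]
    push_cast; ring
  have p2 : ∑ k ∈ Finset.range 1, gg s T (s+1+k) = -2 := by
    rw [Finset.sum_range_one]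
    unfold gg
    rw [if_neg (by omega), if_pos (by omega)]
  have p3 : ∑ k ∈ Finset.range (s-1), gg s T (s+2+k)
      = ∑ k ∈ Finset.range (s-1), ((k:ℤ) + ((T:ℤ)+2)) := by
    refine Finset.sum_congr rfl fun k hk => ?_
    unfold gg
    rw [if_neg (by omega), if_neg (by omega)]
    push_cast; ring
  rw [p1, p2, p3]
  have q1 := sum_shift (s+1) (-((s:ℤ)+T+2))
  have q3 := sum_shift (s-1) ((T:ℤ)+2)
  have hc : ((s-1:ℕ):ℤ) = (s:ℤ)-1 := by omega
  rw [hc] at q3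
  push_cast at q1 q3 ⊢
  nlinarith [q1, q3]

lemma SH (s T : ℕ) (hT : 1 ≤ T) :
    ∑ k ∈ Finset.range (2*T+1), hh s T k = (s:ℤ)+T+2 := by
  rw [Finset.range_eq_Ico,
      ← Finset.sum_Ico_consecutive _ (by omega : 0 ≤ 2*T) (by omega : 2*T ≤ 2*T+1),
      ← Finset.sum_Ico_consecutive _ (by omega : 0 ≤ T) (by omega : T ≤ 2*T),
      ← Finset.sum_Ico_consecutive _ (by omega : 0 ≤ T-1) (by omega : T-1 ≤ T)]
  rw [Finset.sum_Ico_eq_sum_range, Finset.sum_Ico_eq_sum_range,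
      Finset.sum_Ico_eq_sum_range, Finset.sum_Ico_eq_sum_range]
  have e1 : T-1-0 = T-1 := by omega
  have e2 : T-(T-1) = 1 := by omega
  have e3 : 2*T-T = T := by omega
  have e4 : 2*T+1-2*T = 1 := by omega
  rw [e1, e2, e3, e4]
  have p1 : ∑ k ∈ Finset.range (T-1), hh s T (0+k)
      = ∑ k ∈ Finset.range (T-1), ((k:ℤ) + (-((T:ℤ)+1))) := by
    refine Finset.sum_congr rfl fun k hk => ?_
    have hk' := Finset.mem_range.mp hk
    unfold hh
    rw [if_pos (by omega)]
    push_cast; ring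
  have p2 : ∑ k ∈ Finset.range 1, hh s T (T-1+k) = -1 := by
    rw [Finset.sum_range_one]
    unfold hh
    rw [if_neg (by omega), if_pos (by omega)]
  have p3 : ∑ k ∈ Finset.range T, hh s T (T+k)
      = ∑ k ∈ Finset.range T, ((k:ℤ) + 2) := by
    refine Finset.sum_congr rfl fun k hk => ?_
    have hk' := Finset.mem_range.mp hk
    unfold hh
    rw [if_neg (by omega), if_neg (by omega), if_pos (by omega)]
    push_cast; ring
  have p4 : ∑ k ∈ Finset.range 1, hh s T (2*T+k) = (s:ℤ)+T+1 := by
    rw [Finset.sum_range_one]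
    unfold hh
    rw [if_neg (by omega), if_neg (by omega), if_neg (by omega)]
  rw [p1, p2, p3, p4]
  have q1 := sum_shift (T-1) (-((T:ℤ)+1))
  have q3 := sum_shift T (2:ℤ)
  have hc : ((T-1:ℕ):ℤ) = (T:ℤ)-1 := by omega
  rw [hc] at q1
  push_cast at q1 q3 ⊢
  nlinarith [q1, q3]

lemma Bsum (s T : ℕ) : ∑ i : Fin (2*s+1+2), seq2 (2*s+1) 1 (2*T+1) i = 2*T+2 := by
  simp only [seq2]
  rw [Fin.sum_univ_eq_sum_range (fun k => if k < 2*s+1 then 0 else if k = 2*s+1 then 1 else 2*T+1)]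
  rw [show 2*s+1+2 = (2*s+1+1)+1 by omega, Finset.sum_range_succ, Finset.sum_range_succ]
  rw [Finset.sum_eq_zero (fun k hk => by
    have := Finset.mem_range.mp hk
    rw [if_pos]; omega)]
  split_ifs <;> omega

lemma cardE (s T : ℕ) :
    Fintype.card (RTEdge (2*s+1+2) (seq2 (2*s+1) 1 (2*T+1))) = 2*s+2*T+5 := by
  have : Fintype.card (RTEdge (2*s+1+2) (seq2 (2*s+1) 1 (2*T+1)))
      = (2*s+1+2) + ∑ i : Fin (2*s+1+2), seq2 (2*s+1) 1 (2*T+1) i := by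
    simp [RTEdge, Fintype.card_sigma]
  rw [this, Bsum]; omega

lemma cardV (s T : ℕ) :
    Fintype.card (RTVertex (2*s+1+2) (seq2 (2*s+1) 1 (2*T+1))) = 2*s+2*T+6 := by
  have : Fintype.card (RTVertex (2*s+1+2) (seq2 (2*s+1) 1 (2*T+1)))
      = Fintype.card (RTEdge (2*s+1+2) (seq2 (2*s+1) 1 (2*T+1))) + 1 := by
    simp [RTVertex]
  rw [this, cardE]

lemma segOdd (s T : ℕ) :
    segSet (2*s+2*T+5) = Finset.Icc (-((s:ℤ)+T+2)) ((s:ℤ)+T+2) := by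
  unfold segSet
  rw [if_neg (by omega)]
  have h : (2*s+2*T+5)/2 = s+T+2 := by omega
  rw [h]
  congr 1 <;> push_cast <;> ring

lemma segEven (s T : ℕ) :
    segSet (2*s+2*T+6) = (Finset.Icc (-((s:ℤ)+T+3)) ((s:ℤ)+T+3)).erase 0 := by
  unfold segSet
  rw [if_pos (by omega)]
  have h : (2*s+2*T+6)/2 = s+T+3 := by omega
  rw [h]
  congr 2 <;> push_cast <;> ring

lemma cardSegOdd (s T : ℕ) : (segSet (2*s+2*T+5)).card = 2*s+2*T+5 := by
  rw [segOdd, Int.card_Icc]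
  omega

lemma cardSegEven (s T : ℕ) : (segSet (2*s+2*T+6)).card = 2*s+2*T+6 := by
  rw [segEven, Finset.card_erase_of_mem (by rw [Finset.mem_Icc]; omega),
      Int.card_Icc]
  omega

lemma bijOn_of {α : Type*} [Fintype α] [DecidableEq α] (f : α → ℤ) (S : Finset ℤ)
    (hm : ∀ x, f x ∈ S) (hinj : Function.Injective f) (hcard : S.card = Fintype.card α) :
    Set.BijOn f Set.univ ↑S := by
  have himg : Finset.image f Finset.univ = S := by
    apply Finset.eq_of_subset_of_card_le
    · intro y hy
      obtain ⟨x, -, rfl⟩ := Finset.mem_image.mp hy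
      exact hm x
    · rw [Finset.card_image_of_injective _ hinj, Finset.card_univ, hcard]
  refine ⟨fun x _ => Finset.mem_coe.mpr (hm x), hinj.injOn, fun y hy => ?_⟩
  have hy' : y ∈ Finset.image f Finset.univ := by rw [himg]; exact Finset.mem_coe.mp hy
  obtain ⟨x, -, rfl⟩ := Finset.mem_image.mp hy'
  exact ⟨x, Set.mem_univ x, rfl⟩

lemma ff_mem (s T : ℕ) (hs : 1 ≤ s) (hT : 1 ≤ T) (x : RTEdge (2*s+1+2) (seq2 (2*s+1) 1 (2*T+1))) :
    ff s T x ∈ segSet (2*s+2*T+5) := by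
  rw [segOdd, Finset.mem_Icc]
  rcases x with i | ⟨i, m⟩
  · have h2 := i.isLt
    simp only [ff]
    split_ifs with c1 c2
    · omega
    · omega
    · have g1 := gg_cases s T hs hT (i:ℕ) (by omega)
      omega
  · have hp := idx2 s T i m
    simp only [ff]
    split_ifs with c1
    · omega
    · have g2 := hh_cases s T hT (m:ℕ) (by omega)
      omega

lemma ff_inj (s T : ℕ) (hs : 1 ≤ s) (hT : 1 ≤ T) : Function.Injective (ff s T) := by
  intro x y h
  rcases x with i | ⟨i, m⟩ <;> rcases y with i' | ⟨i', m'⟩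
  · -- inl, inl
    have h2 := i.isLt; have h2' := i'.isLt
    simp only [ff] at h
    refine congrArg Sum.inl (Fin.ext ?_)
    split_ifs at h <;>
      (try have g1 := gg_cases s T hs hT (i:ℕ) (by omega)) <;>
      (try have g2 := gg_cases s T hs hT (i':ℕ) (by omega)) <;>
      (try have g3 := gg_inj s T hs hT (i:ℕ) (i':ℕ) (by omega) (by omega) h) <;>
      omega
  · -- inl, inr : impossible
    exfalso
    have h2 := i.isLt
    have hp := idx2 s T i' m'
    have g2 := hh_cases s T hT (m':ℕ) (by omega)
    simp only [ff] at h
    split_ifs at h <;>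
      (try have g1 := gg_cases s T hs hT (i:ℕ) (by omega)) <;>
      omega
  · -- inr, inl : impossible
    exfalso
    have h2' := i'.isLt
    have hp := idx2 s T i m
    have g2 := hh_cases s T hT (m:ℕ) (by omega)
    simp only [ff] at h
    split_ifs at h <;>
      (try have g1 := gg_cases s T hs hT (i':ℕ) (by omega)) <;>
      omega
  · -- inr, inr
    have hp := idx2 s T i m
    have hp' := idx2 s T i' m'
    have g2 := hh_cases s T hT (m:ℕ) (by omega)
    have g2' := hh_cases s T hT (m':ℕ) (by omega)
    simp only [ff] at h
    have hi : i = i' := by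
      refine Fin.ext ?_
      split_ifs at h <;> omega
    subst hi
    have hm : m = m' := by
      refine Fin.ext ?_
      split_ifs at h with c1
      · omega
      · have := hh_inj s T hs hT (m:ℕ) (m':ℕ) (by omega) (by omega) h
        omega
    rw [hm]

lemma vv_mem (s T : ℕ) (hs : 1 ≤ s) (hT : 1 ≤ T)
    (x : RTVertex (2*s+1+2) (seq2 (2*s+1) 1 (2*T+1))) :
    vv s T x ∈ segSet (2*s+2*T+6) := by
  rw [segEven, Finset.mem_erase, Finset.mem_Icc]
  rcases x with _ | i | ⟨i, m⟩
  · simp only [vv]; omega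
  · have h2 := i.isLt
    simp only [vv]
    split_ifs with c1 c2
    · omega
    · omega
    · have g1 := gg_cases s T hs hT (i:ℕ) (by omega)
      omega
  · have hp := idx2 s T i m
    simp only [vv]
    split_ifs with c1
    · omega
    · have g2 := hh_cases s T hT (m:ℕ) (by omega)
      omega

lemma vv_inj (s T : ℕ) (hs : 1 ≤ s) (hT : 1 ≤ T) : Function.Injective (vv s T) := by
  intro x y h
  rcases x with _ | i | ⟨i, m⟩ <;> rcases y with _ | i' | ⟨i', m'⟩
  · rfl
  · exfalso
    have h2' := i'.isLt
    simp only [vv] at h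
    split_ifs at h <;>
      (try have g1 := gg_cases s T hs hT (i':ℕ) (by omega)) <;> omega
  · exfalso
    have hp' := idx2 s T i' m'
    have g2' := hh_cases s T hT (m':ℕ) (by omega)
    simp only [vv] at h
    split_ifs at h <;> omega
  · exfalso
    have h2 := i.isLt
    simp only [vv] at h
    split_ifs at h <;>
      (try have g1 := gg_cases s T hs hT (i:ℕ) (by omega)) <;> omega
  · -- inl, inl
    have h2 := i.isLt; have h2' := i'.isLt
    simp only [vv] at h
    refine congrArg (fun z => some (Sum.inl z)) (Fin.ext ?_)
    split_ifs at h <;>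
      (try have g1 := gg_cases s T hs hT (i:ℕ) (by omega)) <;>
      (try have g2 := gg_cases s T hs hT (i':ℕ) (by omega)) <;>
      (try have g3 := gg_inj s T hs hT (i:ℕ) (i':ℕ) (by omega) (by omega) h) <;>
      omega
  · -- inl, inr : impossible
    exfalso
    have h2 := i.isLt
    have hp' := idx2 s T i' m'
    have g2' := hh_cases s T hT (m':ℕ) (by omega)
    simp only [vv] at h
    split_ifs at h <;>
      (try have g1 := gg_cases s T hs hT (i:ℕ) (by omega)) <;> omega
  · exfalso
    have hp := idx2 s T i m
    have g2 := hh_cases s T hT (m:ℕ) (by omega)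
    simp only [vv] at h
    split_ifs at h <;> omega
  · exfalso
    have h2' := i'.isLt
    have hp := idx2 s T i m
    have g2 := hh_cases s T hT (m:ℕ) (by omega)
    simp only [vv] at h
    split_ifs at h <;>
      (try have g1 := gg_cases s T hs hT (i':ℕ) (by omega)) <;> omega
  · -- inr, inr
    have hp := idx2 s T i m
    have hp' := idx2 s T i' m'
    have g2 := hh_cases s T hT (m:ℕ) (by omega)
    have g2' := hh_cases s T hT (m':ℕ) (by omega)
    simp only [vv] at h
    have hi : i = i' := by
      refine Fin.ext ?_
      split_ifs at h <;> omega
    subst hi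
    have hm : m = m' := by
      refine Fin.ext ?_
      split_ifs at h with c1
      · omega
      · have := hh_inj s T hs hT (m:ℕ) (m':ℕ) (by omega) (by omega) h
        omega
    rw [hm]

lemma vveq (s T : ℕ) (hs : 1 ≤ s) (hT : 1 ≤ T) :
    vertexSum (seq2 (2*s+1) 1 (2*T+1)) (ff s T) = vv s T := by
  funext v
  match v with
  | none =>
    simp only [vertexSum, vv, ff]
    rw [Fin.sum_univ_eq_sum_range
      (fun k => if k = 2*s+1 then ((s:ℤ)+(T:ℤ)+2) else if k = 2*s+2 then 0 else gg s T k)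
      (2*s+1+2)]
    rw [show 2*s+1+2 = (2*s+1+1)+1 from by omega, Finset.sum_range_succ, Finset.sum_range_succ]
    have hc : ∑ k ∈ Finset.range (2*s+1),
        (if k = 2*s+1 then ((s:ℤ)+(T:ℤ)+2) else if k = 2*s+2 then 0 else gg s T k)
        = ∑ k ∈ Finset.range (2*s+1), gg s T k := by
      refine Finset.sum_congr rfl fun k hk => ?_
      have := Finset.mem_range.mp hk
      rw [if_neg (by omega), if_neg (by omega)]
    rw [hc, SG s T hs, if_pos rfl, if_neg (by omega), if_pos (by omega)]
    push_cast
    ring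
  | some (Sum.inl i) =>
    simp only [vertexSum, vv, ff]
    rw [Fin.sum_univ_eq_sum_range
      (fun k => if (i:ℕ) = 2*s+1 then (1:ℤ) else hh s T k)
      (seq2 (2*s+1) 1 (2*T+1) i)]
    have h2 := i.isLt
    by_cases c1 : (i:ℕ) = 2*s+1
    · have hv : seq2 (2*s+1) 1 (2*T+1) i = 1 := by
        rw [seqv, if_neg (by omega), if_pos c1]
      rw [hv, Finset.sum_range_one]
      split_ifs <;> omega
    · by_cases c2 : (i:ℕ) = 2*s+2
      · have hv : seq2 (2*s+1) 1 (2*T+1) i = 2*T+1 := by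
          rw [seqv, if_neg (by omega), if_neg c1]
        rw [hv]
        have hc : ∑ k ∈ Finset.range (2*T+1), (if (i:ℕ) = 2*s+1 then (1:ℤ) else hh s T k)
            = ∑ k ∈ Finset.range (2*T+1), hh s T k :=
          Finset.sum_congr rfl fun k _ => if_neg c1
        rw [hc, SH s T hT]
        split_ifs <;> omega
      · have hv : seq2 (2*s+1) 1 (2*T+1) i = 0 := by
          rw [seqv, if_pos (by omega)]
        rw [hv, Finset.sum_range_zero]
        split_ifs <;> omega
  | some (Sum.inr ⟨i, m⟩) => rfl

lemma main (s T : ℕ) (hs : 1 ≤ s) (hT : 1 ≤ T) : IsSEG (seq2 (2*s+1) 1 (2*T+1)) := by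
  refine ⟨ff s T, ?_, ?_⟩
  · have hq : (2*s+1+2) + (∑ i, seq2 (2*s+1) 1 (2*T+1) i) = 2*s+2*T+5 := by
      rw [Bsum]; omega
    rw [hq]
    exact bijOn_of _ _ (ff_mem s T hs hT) (ff_inj s T hs hT)
      (by rw [cardSegOdd, cardE])
  · have hq : (2*s+1+2) + (∑ i, seq2 (2*s+1) 1 (2*T+1) i) + 1 = 2*s+2*T+6 := by
      rw [Bsum]; omega
    rw [hq, vveq s T hs hT]
    exact bijOn_of _ _ (vv_mem s T hs hT) (vv_inj s T hs hT)
      (by rw [cardSegEven, cardV])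

end SEG6

/-- For all odd integers `j ≥ 3` and `b ≥ 3`, the rooted tree `RT(0^j, 1, b)` is super
edge-graceful. -/


theorem stmt6 (j b : ℕ) (hj : Odd j) (hj3 : 3 ≤ j) (hb : Odd b) (hb3 : 3 ≤ b) :
    IsSEG (seq2 j 1 b) := by
  obtain ⟨s, rfl⟩ := hj
  obtain ⟨T, rfl⟩ := hb
  exact SEG6.main s T (by omega) (by omega)
end
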